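/- Under the gaps-and-weight setup, fix indices k ≠ j in {1, …, n} with G_j nonempty. For a choice of parameters η_i ∈ [b_{2i−1}, b_{2i}] for each i ≠ k, set J(η) = I_j( t ↦ ∏_{i≠k}(t − η_i) ). Then there is a sign s ∈ {−1, +1}, depending only on n, j, k, ε_j and G_j (and not on the choice of the parameters η_i), such that: whenever η_j = b_{2j−1} one has s · J(η) > 0, and whenever η_j = b_{2j} one has s · J(η) < 0. In particular J(η) is nonzero at both endpoint choices, with opposite signs that do not depend on the positions of the other parameters η_i, i ≠ j, k. -/

import Mathlib

open Finset

/-- The weight `w(t) = √(−∏_{i=0}^{2n}(t − bᵢ))` on the gaps of the hyperelliptic curve. -/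
noncomputable def gapWeight (n : ℕ) (b : Fin (2 * n + 1) → ℝ) (t : ℝ) : ℝ :=
  Real.sqrt (-∏ i, (t - b i))

open MeasureTheory

lemma prod_sub_eq {ι : Type*} (s : Finset ι) (g : ι → ℝ) (t : ℝ) :
    ∏ i ∈ s, (t - g i) = (-1 : ℝ) ^ s.card * ∏ i ∈ s, (g i - t) := by
  rw [← Finset.prod_const, ← Finset.prod_mul_distrib]
  exact Finset.prod_congr rfl fun i _ => by ring

lemma gapWeight_continuous (n : ℕ) (b : Fin (2 * n + 1) → ℝ) : Continuous (gapWeight n b) :=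
  Real.continuous_sqrt.comp
    ((continuous_finset_prod _ fun i _ => (continuous_id.sub continuous_const)).neg)

lemma gap_integral_pos (n : ℕ) (b : Fin (2 * n + 1) → ℝ) (hb : StrictMono b)
    (i1 i2 : Fin (2 * n + 1)) (h12 : (i1 : ℕ) + 1 = (i2 : ℕ)) (hpar : Even (2 * n - (i2 : ℕ)))
    (f : ℝ → ℝ) (hf : Continuous f)
    (hfpos : ∀ t ∈ Set.Ioo (b i1) (b i2), 0 < f t)
    {c d : ℝ} (hc : b i1 ≤ c) (hcd : c < d) (hd : d ≤ b i2) :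
    0 < ∫ t in c..d, f t / gapWeight n b t := by
  set a := b i1 with ha
  set B := b i2 with hB
  have haB : a < B := hb (by rw [Fin.lt_def]; omega)
  set P : ℝ → ℝ := fun t => ∏ i ∈ (univ.erase i1).erase i2, (t - b i) with hPdef
  have hPcont : Continuous P :=
    continuous_finset_prod _ fun i _ => continuous_id.sub continuous_const
  have hi21 : i2 ≠ i1 := by rw [Ne, Fin.ext_iff]; omega
  have hSset : (univ.erase i1).erase i2 = Finset.Iio i1 ∪ Finset.Ioi i2 := by
    ext i
    simp only [Finset.mem_erase, Finset.mem_union, Finset.mem_Iio, Finset.mem_Ioi,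
      Finset.mem_univ, and_true, Ne, Fin.ext_iff, Fin.lt_def]
    omega
  have hdisj : Disjoint (Finset.Iio i1) (Finset.Ioi i2) := by
    rw [Finset.disjoint_left]
    intro i h1 h2
    rw [Finset.mem_Iio, Fin.lt_def] at h1
    rw [Finset.mem_Ioi, Fin.lt_def] at h2
    omega
  have hPpos : ∀ t ∈ Set.Icc a B, 0 < P t := by
    intro t ht
    rw [hPdef]
    simp only [hSset]
    rw [Finset.prod_union hdisj]
    have h1 : 0 < ∏ i ∈ Finset.Iio i1, (t - b i) := by
      refine Finset.prod_pos fun i hi => ?_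
      have : b i < a := hb (Finset.mem_Iio.mp hi)
      have := ht.1
      linarith
    have h2 : 0 < ∏ i ∈ Finset.Ioi i2, (t - b i) := by
      rw [prod_sub_eq]
      have hpp : 0 < ∏ i ∈ Finset.Ioi i2, (b i - t) := by
        refine Finset.prod_pos fun i hi => ?_
        have : B < b i := hb (Finset.mem_Ioi.mp hi)
        have := ht.2
        linarith
      have hcard : Even (Finset.Ioi i2).card := by
        rw [Fin.card_Ioi]
        obtain ⟨r, hr⟩ := hpar
        exact ⟨r, by omega⟩
      rw [hcard.neg_one_pow, one_mul]
      exact hpp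
    exact mul_pos h1 h2
  have hkey : ∀ t : ℝ, -∏ i, (t - b i) = (t - a) * ((B - t) * P t) := by
    intro t
    rw [← Finset.mul_prod_erase _ _ (Finset.mem_univ i1),
      ← Finset.mul_prod_erase _ _ (Finset.mem_erase.mpr ⟨hi21, Finset.mem_univ i2⟩)]
    rw [hPdef]
    ring
  have hwpos : ∀ t ∈ Set.Ioo a B, 0 < gapWeight n b t := by
    intro t ht
    rw [gapWeight]
    apply Real.sqrt_pos.mpr
    rw [hkey]
    have hP := hPpos t (Set.Ioo_subset_Icc_self ht)
    have h1 := ht.1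
    have h2 := ht.2
    have : 0 < t - a := by linarith
    have : 0 < B - t := by linarith
    positivity
  -- minimum of P
  obtain ⟨t0, ht0, hmin⟩ :=
    isCompact_Icc.exists_isMinOn (Set.nonempty_Icc.mpr haB.le) hPcont.continuousOn
  set δ := P t0 with hδdef
  have hδpos : 0 < δ := hPpos t0 ht0
  have hδle : ∀ t ∈ Set.Icc a B, δ ≤ P t := fun t ht => hmin ht
  -- bound on f
  obtain ⟨M0, hM0⟩ := isCompact_Icc.exists_bound_of_continuousOn hf.continuousOn
  set M := max M0 0 with hMdef
  have hMnn : 0 ≤ M := le_max_right _ _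
  have hM : ∀ t ∈ Set.Icc a B, |f t| ≤ M := fun t ht =>
    le_trans (by simpa [Real.norm_eq_abs] using hM0 t ht) (le_max_left _ _)
  -- lower bound on the weight
  have hwlb : ∀ t ∈ Set.Icc a B,
      Real.sqrt δ * Real.sqrt ((t - a) * (B - t)) ≤ gapWeight n b t := by
    intro t ht
    have h1 : 0 ≤ (t - a) * (B - t) :=
      mul_nonneg (by linarith [ht.1]) (by linarith [ht.2])
    rw [gapWeight, hkey, ← Real.sqrt_mul hδpos.le]
    apply Real.sqrt_le_sqrt
    calc δ * ((t - a) * (B - t)) ≤ P t * ((t - a) * (B - t)) :=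
          mul_le_mul_of_nonneg_right (hδle t ht) h1
      _ = (t - a) * ((B - t) * P t) := by ring
  set mid := (a + B) / 2 with hmiddef
  have hamid : a < mid := by rw [hmiddef]; linarith
  have hmidB : mid < B := by rw [hmiddef]; linarith
  set r : ℝ := -(1 / 2) with hrdef
  set D := Real.sqrt δ * Real.sqrt ((B - a) / 2) with hDdef
  have hDpos : 0 < D :=
    mul_pos (Real.sqrt_pos.mpr hδpos) (Real.sqrt_pos.mpr (by linarith))
  set C := M / D with hCdef
  have hCnn : 0 ≤ C := div_nonneg hMnn hDpos.le
  have hmeas : AEStronglyMeasurable (fun t => f t / gapWeight n b t)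
      (volume.restrict (Set.Ioc a mid)) :=
    (hf.measurable.div (gapWeight_continuous n b).measurable).aestronglyMeasurable
  have hmeas2 : AEStronglyMeasurable (fun t => f t / gapWeight n b t)
      (volume.restrict (Set.Ioc mid B)) :=
    (hf.measurable.div (gapWeight_continuous n b).measurable).aestronglyMeasurable
  -- pointwise bound on the left half
  have hb1 : ∀ t ∈ Set.Ioc a mid, ‖f t / gapWeight n b t‖ ≤ C * (t - a) ^ r := by
    intro t ht
    have hta : 0 < t - a := by linarith [ht.1]
    have htI : t ∈ Set.Icc a B := ⟨ht.1.le, by linarith [ht.2]⟩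
    have hwb : D * Real.sqrt (t - a) ≤ gapWeight n b t := by
      refine le_trans ?_ (hwlb t htI)
      rw [Real.sqrt_mul hta.le]
      have hsq : Real.sqrt ((B - a) / 2) ≤ Real.sqrt (B - t) :=
        Real.sqrt_le_sqrt (by linarith [ht.2, hmiddef.le, hmiddef.ge])
      have h0 : (0:ℝ) ≤ Real.sqrt δ := Real.sqrt_nonneg _
      have h1 : (0:ℝ) ≤ Real.sqrt (t - a) := Real.sqrt_nonneg _
      rw [hDdef]
      calc Real.sqrt δ * Real.sqrt ((B - a) / 2) * Real.sqrt (t - a)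
          = (Real.sqrt δ * Real.sqrt (t - a)) * Real.sqrt ((B - a) / 2) := by ring
        _ ≤ (Real.sqrt δ * Real.sqrt (t - a)) * Real.sqrt (B - t) :=
            mul_le_mul_of_nonneg_left hsq (mul_nonneg h0 h1)
        _ = Real.sqrt δ * (Real.sqrt (t - a) * Real.sqrt (B - t)) := by ring
    have hDs : 0 < D * Real.sqrt (t - a) := mul_pos hDpos (Real.sqrt_pos.mpr hta)
    have hwp : 0 < gapWeight n b t := lt_of_lt_of_le hDs hwb
    rw [norm_div, Real.norm_eq_abs, Real.norm_eq_abs, abs_of_pos hwp]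
    have h1 : |f t| / gapWeight n b t ≤ M / (D * Real.sqrt (t - a)) :=
      div_le_div₀ hMnn (hM t htI) hDs hwb
    refine h1.trans (le_of_eq ?_)
    rw [hrdef, Real.rpow_neg hta.le, ← Real.sqrt_eq_rpow, div_mul_eq_div_div, hCdef,
      div_eq_mul_inv (M / D)]
  -- pointwise bound on the right half
  have hb2 : ∀ t ∈ Set.Ioc mid B, ‖f t / gapWeight n b t‖ ≤ C * (B - t) ^ r := by
    intro t ht
    rcases eq_or_lt_of_le ht.2 with hteq | htlt
    · have hwz : gapWeight n b t = 0 := by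
        rw [gapWeight, hkey, hteq, sub_self, zero_mul, mul_zero, Real.sqrt_zero]
      rw [hwz, div_zero, norm_zero, hteq, sub_self, Real.zero_rpow (by rw [hrdef]; norm_num),
        mul_zero]
    · have htB : 0 < B - t := by linarith
      have htI : t ∈ Set.Icc a B := ⟨by linarith [ht.1], ht.2⟩
      have hwb : D * Real.sqrt (B - t) ≤ gapWeight n b t := by
        refine le_trans ?_ (hwlb t htI)
        rw [Real.sqrt_mul (by linarith [ht.1] : (0:ℝ) ≤ t - a)]
        have hsq : Real.sqrt ((B - a) / 2) ≤ Real.sqrt (t - a) :=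
          Real.sqrt_le_sqrt (by linarith [ht.1, hmiddef.le, hmiddef.ge])
        have h0 : (0:ℝ) ≤ Real.sqrt δ := Real.sqrt_nonneg _
        have h1 : (0:ℝ) ≤ Real.sqrt (B - t) := Real.sqrt_nonneg _
        rw [hDdef]
        calc Real.sqrt δ * Real.sqrt ((B - a) / 2) * Real.sqrt (B - t)
            = (Real.sqrt δ * Real.sqrt (B - t)) * Real.sqrt ((B - a) / 2) := by ring
          _ ≤ (Real.sqrt δ * Real.sqrt (B - t)) * Real.sqrt (t - a) :=
              mul_le_mul_of_nonneg_left hsq (mul_nonneg h0 h1)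
          _ = Real.sqrt δ * (Real.sqrt (t - a) * Real.sqrt (B - t)) := by ring
      have hDs : 0 < D * Real.sqrt (B - t) := mul_pos hDpos (Real.sqrt_pos.mpr htB)
      have hwp : 0 < gapWeight n b t := lt_of_lt_of_le hDs hwb
      rw [norm_div, Real.norm_eq_abs, Real.norm_eq_abs, abs_of_pos hwp]
      have h1 : |f t| / gapWeight n b t ≤ M / (D * Real.sqrt (B - t)) :=
        div_le_div₀ hMnn (hM t htI) hDs hwb
      refine h1.trans (le_of_eq ?_)
      rw [hrdef, Real.rpow_neg htB.le, ← Real.sqrt_eq_rpow, div_mul_eq_div_div, hCdef,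
        div_eq_mul_inv (M / D)]
  -- integrability of the bounds
  have hint1 : IntegrableOn (fun t => f t / gapWeight n b t) (Set.Ioc a mid) := by
    have h1 : IntervalIntegrable (fun x : ℝ => x ^ r) volume 0 (mid - a) :=
      intervalIntegral.intervalIntegrable_rpow' (by rw [hrdef]; norm_num)
    have h2 := (h1.comp_sub_right a).const_mul C
    rw [zero_add, sub_add_cancel] at h2
    refine Integrable.mono h2.1 hmeas ?_
    rw [ae_restrict_iff' measurableSet_Ioc]
    filter_upwards with t ht
    exact (hb1 t ht).trans (le_abs_self _)
  have hint2 : IntegrableOn (fun t => f t / gapWeight n b t) (Set.Ioc mid B) := by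
    have h1 : IntervalIntegrable (fun x : ℝ => x ^ r) volume 0 (B - mid) :=
      intervalIntegral.intervalIntegrable_rpow' (by rw [hrdef]; norm_num)
    have h2 := (h1.comp_sub_left B).const_mul C
    rw [sub_zero, sub_sub_cancel] at h2
    refine Integrable.mono h2.2 hmeas2 ?_
    rw [ae_restrict_iff' measurableSet_Ioc]
    filter_upwards with t ht
    exact (hb2 t ht).trans (le_abs_self _)
  have hIcc : IntegrableOn (fun t => f t / gapWeight n b t) (Set.Icc a B) := by
    rw [integrableOn_Icc_iff_integrableOn_Ioo]
    refine (hint1.union hint2).mono_set ?_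
    rw [Set.Ioc_union_Ioc_eq_Ioc hamid.le hmidB.le]
    exact Set.Ioo_subset_Ioc_self
  have hii : IntervalIntegrable (fun t => f t / gapWeight n b t) volume c d :=
    (hIcc.mono_set (by rw [Set.uIcc_of_le hcd.le]; exact Set.Icc_subset_Icc hc hd)).intervalIntegrable
  refine intervalIntegral.intervalIntegral_pos_of_pos_on hii (fun t ht => ?_) hcd
  have htm : t ∈ Set.Ioo a B := ⟨lt_of_le_of_lt hc ht.1, lt_of_lt_of_le ht.2 hd⟩
  exact div_pos (hfpos t htm) (hwpos t htm)

/-- The signed integral `I_j(f) = ε_j · Σ_{(c,d) ∈ G_j} ∫_c^d f(t)/w(t) dt` over the pieces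
of the collection of paths `G_j` lying in gap `j`. -/
noncomputable def gapIntegral (n : ℕ) (b : Fin (2 * n + 1) → ℝ) (ε : Fin n → ℝ)
    (G : Fin n → List (ℝ × ℝ)) (j : Fin n) (f : ℝ → ℝ) : ℝ :=
  ε j * ((G j).map fun pr => ∫ t in pr.1..pr.2, f t / gapWeight n b t).sum

/-- The sign-flip step in the proof of the non-degeneration Lemma: for `k ≠ j` with `G_j`
nonempty, setting `J(η) = I_j(∏_{i≠k}(t − ηᵢ))` with `ηᵢ ∈ [b_{2i−1}, b_{2i}]` for `i ≠ k`,
there is a sign `s` (independent of the `ηᵢ`) such that `s·J(η) > 0` whenever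
`η_j = b_{2j−1}` and `s·J(η) < 0` whenever `η_j = b_{2j}`. -/
theorem sign_flip_across_gap (n : ℕ) (hn : 1 ≤ n)
    (b : Fin (2 * n + 1) → ℝ) (hb0 : b 0 = 0) (hb : StrictMono b)
    (ε : Fin n → ℝ) (hε : ∀ j, ε j = 1 ∨ ε j = -1)
    (G : Fin n → List (ℝ × ℝ))
    (hG : ∀ j : Fin n, ∀ pr ∈ G j,
      b ⟨2 * (j : ℕ) + 1, by omega⟩ ≤ pr.1 ∧ pr.1 < pr.2 ∧
        pr.2 ≤ b ⟨2 * (j : ℕ) + 2, by omega⟩)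
    (k j : Fin n) (hkj : k ≠ j) (hj : G j ≠ []) :
    ∃ s : ℝ, (s = 1 ∨ s = -1) ∧
      ∀ η : Fin n → ℝ,
        (∀ i : Fin n, i ≠ k →
          η i ∈ Set.Icc (b ⟨2 * (i : ℕ) + 1, by omega⟩) (b ⟨2 * (i : ℕ) + 2, by omega⟩)) →
        (η j = b ⟨2 * (j : ℕ) + 1, by omega⟩ →
          0 < s * gapIntegral n b ε G j (fun t => ∏ i ∈ univ.erase k, (t - η i))) ∧
        (η j = b ⟨2 * (j : ℕ) + 2, by omega⟩ →
          s * gapIntegral n b ε G j (fun t => ∏ i ∈ univ.erase k, (t - η i)) < 0) := by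
  have hjn : (j : ℕ) < n := j.2
  set i1 : Fin (2 * n + 1) := ⟨2 * (j : ℕ) + 1, by omega⟩ with hi1
  set i2 : Fin (2 * n + 1) := ⟨2 * (j : ℕ) + 2, by omega⟩ with hi2
  set m := ((univ.erase k).filter (fun i => j < i)).card with hm
  refine ⟨ε j * (-1) ^ m, ?_, ?_⟩
  · rcases hε j with h | h <;> rcases Nat.even_or_odd m with hpar | hpar <;>
      simp [h, hpar.neg_one_pow]
  intro η hη
  have haB : b i1 < b i2 := hb (by rw [Fin.lt_def]; simp [hi1, hi2])
  set T := (univ.erase k).erase j with hT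
  set F : ℝ → ℝ := fun t => ∏ i ∈ univ.erase k, (t - η i) with hF
  have hFsplit : ∀ t : ℝ, F t = (t - η j) * ∏ i ∈ T, (t - η i) := fun t =>
    (Finset.mul_prod_erase _ _ (Finset.mem_erase.mpr ⟨hkj.symm, Finset.mem_univ j⟩)).symm
  have hTsplit : T = T.filter (fun i => i < j) ∪ T.filter (fun i => j < i) := by
    ext i
    simp only [Finset.mem_union, Finset.mem_filter]
    constructor
    · intro hi
      rcases lt_trichotomy i j with h | h | h
      · exact Or.inl ⟨hi, h⟩
      · exact absurd h (by rw [hT] at hi; exact (Finset.mem_erase.mp hi).1)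
      · exact Or.inr ⟨hi, h⟩
    · rintro (⟨hi, -⟩ | ⟨hi, -⟩) <;> exact hi
  have hdisjT : Disjoint (T.filter (fun i => i < j)) (T.filter (fun i => j < i)) := by
    rw [Finset.disjoint_left]
    intro i h1 h2
    rw [Finset.mem_filter] at h1 h2
    exact absurd (h1.2.trans h2.2) (lt_irrefl i)
  have hcardT : (T.filter (fun i => j < i)).card = m := by
    rw [hm]
    congr 1
    ext i
    simp only [Finset.mem_filter, hT, Finset.mem_erase, Finset.mem_univ, and_true]
    constructor
    · rintro ⟨⟨-, hik⟩, hlt⟩; exact ⟨hik, hlt⟩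
    · rintro ⟨hik, hlt⟩; exact ⟨⟨ne_of_gt hlt, hik⟩, hlt⟩
  have hrest : ∀ t ∈ Set.Ioo (b i1) (b i2), 0 < (-1 : ℝ) ^ m * ∏ i ∈ T, (t - η i) := by
    intro t ht
    rw [hTsplit, Finset.prod_union hdisjT, prod_sub_eq (T.filter (fun i => j < i)) η t, hcardT]
    have hlo : 0 < ∏ i ∈ T.filter (fun i => i < j), (t - η i) := by
      refine Finset.prod_pos fun i hi => ?_
      rw [Finset.mem_filter, hT, Finset.mem_erase, Finset.mem_erase] at hi
      obtain ⟨⟨-, hik, -⟩, hij⟩ := hi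
      have h2 := (hη i hik).2
      have hmono : b ⟨2 * (i : ℕ) + 2, by omega⟩ ≤ b i1 := by
        apply hb.monotone
        rw [Fin.le_def, hi1]
        have : (i : ℕ) < (j : ℕ) := hij
        simp
        omega
      have := ht.1
      linarith [h2]
    have hhi : 0 < ∏ i ∈ T.filter (fun i => j < i), (η i - t) := by
      refine Finset.prod_pos fun i hi => ?_
      rw [Finset.mem_filter, hT, Finset.mem_erase, Finset.mem_erase] at hi
      obtain ⟨⟨-, hik, -⟩, hij⟩ := hi
      have h1 := (hη i hik).1
      have hmono : b i2 ≤ b ⟨2 * (i : ℕ) + 1, by omega⟩ := by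
        apply hb.monotone
        rw [Fin.le_def, hi2]
        have : (j : ℕ) < (i : ℕ) := hij
        simp
        omega
      have := ht.2
      linarith [h1]
    have hsq : ((-1 : ℝ) ^ m) * ((-1 : ℝ) ^ m) = 1 := by
      rw [← pow_add]
      exact Even.neg_one_pow ⟨m, rfl⟩
    calc (0 : ℝ) < (∏ i ∈ T.filter (fun i => i < j), (t - η i)) *
          ∏ i ∈ T.filter (fun i => j < i), (η i - t) := mul_pos hlo hhi
      _ = (-1 : ℝ) ^ m *
          ((∏ i ∈ T.filter (fun i => i < j), (t - η i)) *
            ((-1 : ℝ) ^ m * ∏ i ∈ T.filter (fun i => j < i), (η i - t))) := by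
          rw [show ∀ x y : ℝ, (-1 : ℝ) ^ m * (x * ((-1 : ℝ) ^ m * y)) =
            (((-1 : ℝ) ^ m) * ((-1 : ℝ) ^ m)) * (x * y) from fun x y => by ring, hsq, one_mul]
  have hFcont : Continuous F :=
    continuous_finset_prod _ fun i _ => continuous_id.sub continuous_const
  have hpar : Even (2 * n - (i2 : ℕ)) := by
    rw [hi2]
    exact ⟨n - (j : ℕ) - 1, by simp; omega⟩
  have key : ∀ c : ℝ, (∀ t ∈ Set.Ioo (b i1) (b i2), 0 < c * F t) →
      0 < c * ((G j).map fun pr => ∫ t in pr.1..pr.2, F t / gapWeight n b t).sum := by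
    intro c hc
    rw [← List.sum_map_mul_left]
    apply List.sum_pos
    · intro x hx
      rw [List.mem_map] at hx
      obtain ⟨pr, hpr, rfl⟩ := hx
      rw [← intervalIntegral.integral_const_mul]
      simp only [← mul_div_assoc]
      obtain ⟨h1, h2, h3⟩ := hG j pr hpr
      exact gap_integral_pos n b hb i1 i2 (by rw [hi1, hi2]) hpar _
        (continuous_const.mul hFcont) hc h1 h2 h3
    · intro hnil
      exact hj (List.map_eq_nil_iff.mp hnil)
  have hε2 : ε j * ε j = 1 := by rcases hε j with h | h <;> rw [h] <;> norm_num
  have hgi : ∀ c : ℝ, (ε j * c) * gapIntegral n b ε G j F =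
      c * ((G j).map fun pr => ∫ t in pr.1..pr.2, F t / gapWeight n b t).sum := by
    intro c
    rw [gapIntegral]
    rw [show (ε j * c) * (ε j * ((G j).map fun pr =>
        ∫ t in pr.1..pr.2, F t / gapWeight n b t).sum) =
      (ε j * ε j) * (c * ((G j).map fun pr =>
        ∫ t in pr.1..pr.2, F t / gapWeight n b t).sum) from by ring, hε2, one_mul]
  constructor
  · intro hηj
    rw [hgi]
    apply key
    intro t ht
    rw [hFsplit t, hηj]
    have h1 : 0 < t - b i1 := by have := ht.1; linarith
    calc (0 : ℝ) < (t - b i1) * ((-1 : ℝ) ^ m * ∏ i ∈ T, (t - η i)) :=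
          mul_pos h1 (hrest t ht)
      _ = (-1 : ℝ) ^ m * ((t - b i1) * ∏ i ∈ T, (t - η i)) := by ring
  · intro hηj
    have hk := key (-(-1 : ℝ) ^ m) ?_
    · rw [hgi ((-1 : ℝ) ^ m)]
      linarith
    · intro t ht
      rw [hFsplit t, hηj]
      have h2 : 0 < b i2 - t := by have := ht.2; linarith
      calc (0 : ℝ) < (b i2 - t) * ((-1 : ℝ) ^ m * ∏ i ∈ T, (t - η i)) :=
            mul_pos h2 (hrest t ht)
        _ = -(-1 : ℝ) ^ m * ((t - b i2) * ∏ i ∈ T, (t - η i)) := by ring
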